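/- Let α = s + t·τ + u·τ² + v·τ³ ∈ R with s, t, u, v ∈ ℤ, and let c = c' + c''·τ with c', c'' ∈ ℤ. Suppose 4 divides s − c', and write s − c' = 4·c̃ with c̃ ∈ ℤ. Then τ² divides α − c in R if and only if 4 divides t − c'' + 2μ·c̃. -/

import Mathlib

open Polynomial

noncomputable def P (μ : ℤ) : ℤ[X] := X ^ 4 - C μ * X ^ 3 - C (2 * μ) * X + 4

noncomputable abbrev Rg (μ : ℤ) := AdjoinRoot (P μ)

noncomputable def tau (μ : ℤ) : Rg μ := AdjoinRoot.root (P μ)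

lemma hroot (μ : ℤ) :
    tau μ ^ 4 - (μ : Rg μ) * tau μ ^ 3 - ((2 * μ : ℤ) : Rg μ) * tau μ + 4 = 0 := by
  have h : AdjoinRoot.mk (P μ) (X ^ 4 - C μ * X ^ 3 - C (2 * μ) * X + 4) = 0 :=
    AdjoinRoot.mk_self
  simpa [tau, map_sub, map_add, map_mul, map_pow, AdjoinRoot.mk_X, map_intCast, map_ofNat] using h

/-- If `τ² ∣ n·τ` in `R`, then `4 ∣ n`. -/
lemma fwd (μ n : ℤ) (h : tau μ ^ 2 ∣ (n : Rg μ) * tau μ) : (4 : ℤ) ∣ n := by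
  obtain ⟨q, hq⟩ := h
  obtain ⟨f, rfl⟩ := AdjoinRoot.mk_surjective q
  have hmk : AdjoinRoot.mk (P μ) ((n : ℤ[X]) * X - X ^ 2 * f) = 0 := by
    rw [map_sub, map_mul, map_mul, map_pow, AdjoinRoot.mk_X, map_intCast]
    rw [sub_eq_zero]
    exact hq
  rw [AdjoinRoot.mk_eq_zero] at hmk
  obtain ⟨g, hg⟩ := hmk
  have h0 := congrArg (fun p => p.coeff 0) hg
  have h1 := congrArg (fun p => p.coeff 1) hg
  simp only [P, coeff_sub, coeff_add, coeff_mul,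
    Finset.Nat.sum_antidiagonal_eq_sum_range_succ_mk, Finset.sum_range_succ,
    Finset.sum_range_zero, coeff_X_pow, coeff_C, coeff_X,
    coeff_ofNat_zero, coeff_ofNat_succ] at h0 h1
  norm_num at h0 h1
  rw [h0, mul_zero, neg_zero, add_zero] at h1
  exact ⟨g.coeff 1, h1⟩

/-- For `α = s + t·τ + u·τ² + v·τ³` and a digit `c = c' + c''·τ` with `s − c' = 4·c̃`,
`τ²` divides `α − c` in `R` if and only if `4 ∣ t − c'' + 2μ·c̃`. -/
theorem stmt3 (μ : ℤ) (hμ : μ = 1 ∨ μ = -1) (s t u v c' c'' ctil : ℤ)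
    (hc : s - c' = 4 * ctil) :
    (tau μ ^ 2 ∣ (((s : Rg μ) + (t : Rg μ) * tau μ + (u : Rg μ) * tau μ ^ 2
        + (v : Rg μ) * tau μ ^ 3) - ((c' : Rg μ) + (c'' : Rg μ) * tau μ)))
      ↔ (4 : ℤ) ∣ (t - c'' + 2 * μ * ctil) := by
  have hμ2 : (μ : Rg μ) * (μ : Rg μ) = 1 := by
    rcases hμ with h | h <;> subst h <;> norm_num
  have hR := hroot μ
  have hcC : ((s : Rg μ) - (c' : Rg μ)) = 4 * (ctil : Rg μ) := by
    have := congrArg (fun z : ℤ => (z : Rg μ)) hc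
    push_cast at this
    exact this
  set n : ℤ := t - c'' + 2 * μ * ctil with hn
  -- α − c = n·τ + τ²·w
  have key : (((s : Rg μ) + (t : Rg μ) * tau μ + (u : Rg μ) * tau μ ^ 2
        + (v : Rg μ) * tau μ ^ 3) - ((c' : Rg μ) + (c'' : Rg μ) * tau μ))
      = (n : Rg μ) * tau μ
        + tau μ ^ 2 * ((u : Rg μ) + (v : Rg μ) * tau μ + (μ : Rg μ) * (ctil : Rg μ) * tau μ
            - (ctil : Rg μ) * tau μ ^ 2) := by
    have hnC : (n : Rg μ) = (t : Rg μ) - (c'' : Rg μ) + 2 * (μ : Rg μ) * (ctil : Rg μ) := by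
      rw [hn]; push_cast; ring
    rw [hnC]
    push_cast at hR ⊢
    linear_combination hcC + (ctil : Rg μ) * hR
  rw [key]
  have hdvd_iff : tau μ ^ 2 ∣ ((n : Rg μ) * tau μ
        + tau μ ^ 2 * ((u : Rg μ) + (v : Rg μ) * tau μ + (μ : Rg μ) * (ctil : Rg μ) * tau μ
            - (ctil : Rg μ) * tau μ ^ 2))
      ↔ tau μ ^ 2 ∣ (n : Rg μ) * tau μ := by
    have h2 : tau μ ^ 2 ∣ tau μ ^ 2 * ((u : Rg μ) + (v : Rg μ) * tau μ
        + (μ : Rg μ) * (ctil : Rg μ) * tau μ - (ctil : Rg μ) * tau μ ^ 2) :=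
      Dvd.intro _ rfl
    constructor
    · intro h
      simpa using dvd_sub h h2
    · intro h
      exact dvd_add h h2
  rw [hdvd_iff]
  constructor
  · exact fwd μ n
  · rintro ⟨m, hm⟩
    rw [hm]
    refine ⟨(m : Rg μ) * ((μ : Rg μ) * tau μ ^ 2 + 2 * (μ : Rg μ) - tau μ ^ 3), ?_⟩
    push_cast at hR ⊢
    linear_combination (m : Rg μ) * tau μ * hR
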